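/- Define g : ℕ → ℤ by g m = 0 for m ≤ 2, g 3 = 1, and g m = 2^(m−4) for m ≥ 4; define f : ℕ → ℤ by f m = ∑_{k=0}^{⌊m/3⌋} g (m − 3k); and define c : ℕ → ℤ by c m = ∑_{p=0}^{⌊m/2⌋} f (m − 2p). Then for every m ≥ 1: 2·( ((A^(m−1)).mulVec ![0,0,1]) 1 + ((A^(m−1)).mulVec ![0,0,1]) 2 ) + ((B^(m−1)).mulVec ![0,0,0,1]) 3 + c m + (2 if 3 divides m, else 0) = natDegree((X+1)·(F m).num − X·(F m).denom). -/

import Mathlib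

noncomputable def F : ℕ → RatFunc ℚ
  | 0 => (2 * RatFunc.X) / (RatFunc.X + 1)
  | (m + 1) => ((F m - RatFunc.X) * (F m - 1)) / (F m) ^ 2

open Polynomial

def A : Matrix (Fin 3) (Fin 3) ℤ := !![0, 1, 0; 0, 0, 1; 2, 1, 1]

def B : Matrix (Fin 4) (Fin 4) ℤ :=
  !![0, 0, 0, 1; 0, 1, 1, 0; 2, 1, 0, 0; 0, 0, 1, 1]

def g (m : ℕ) : ℤ :=
  if m ≤ 2 then 0 else if m = 3 then 1 else 2 ^ (m - 4)

def f (m : ℕ) : ℤ :=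
  ∑ k ∈ Finset.range (m / 3 + 1), g (m - 3 * k)

def c (m : ℕ) : ℤ :=
  ∑ p ∈ Finset.range (m / 2 + 1), f (m - 2 * p)


abbrev RQ := RatFunc ℚ
noncomputable abbrev am : ℚ[X] →+* RQ := algebraMap ℚ[X] RQ

lemma am_inj : Function.Injective am := RatFunc.algebraMap_injective ℚ

lemma am_ne_zero {p : ℚ[X]} (h : p ≠ 0) : am p ≠ 0 :=
  RatFunc.algebraMap_ne_zero h

-- helper: degree of difference
lemma degree_sub_helper {a b : ℚ[X]} {D : ℕ}
    (ha : a.natDegree ≤ D) (hb : b.natDegree ≤ D) (h : a.coeff D ≠ b.coeff D) :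
    (a - b).natDegree = D ∧ (a - b).leadingCoeff = a.coeff D - b.coeff D ∧ a - b ≠ 0 := by
  have hco : (a - b).coeff D ≠ 0 := by
    rw [coeff_sub]; exact sub_ne_zero.mpr h
  have hne : a - b ≠ 0 := fun hz => hco (by simp [hz])
  have h1 : D ≤ (a - b).natDegree := le_natDegree_of_ne_zero hco
  have h2 : (a - b).natDegree ≤ D := (natDegree_sub_le a b).trans (max_le ha hb)
  have hdeg : (a - b).natDegree = D := le_antisymm h2 h1
  exact ⟨hdeg, by rw [leadingCoeff, hdeg, coeff_sub], hne⟩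

lemma coeff_mul_one (s t : ℚ[X]) :
    (s * t).coeff 1 = s.coeff 0 * t.coeff 1 + s.coeff 1 * t.coeff 0 := by
  rw [coeff_mul, Finset.Nat.sum_antidiagonal_eq_sum_range_succ_mk]
  rw [Finset.sum_range_succ, Finset.sum_range_succ, Finset.sum_range_zero]
  norm_num [add_comm]

lemma isCoprime_X_of {p : ℚ[X]} (h : p.coeff 0 ≠ 0) : IsCoprime (X : ℚ[X]) p := by
  refine ⟨-(C (p.coeff 0)⁻¹ * p.divX), C (p.coeff 0)⁻¹, ?_⟩
  have h1 : X * p.divX + C (p.coeff 0) = p := X_mul_divX_add p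
  have hC : (C (p.coeff 0)⁻¹ : ℚ[X]) * C (p.coeff 0) = 1 := by
    rw [← C_mul, inv_mul_cancel₀ h, C_1]
  linear_combination (-(C (p.coeff 0)⁻¹ : ℚ[X])) * h1 + hC

lemma rat_no_root (x : ℚ) : x ^ 2 + x - 1 ≠ 0 := by
  intro h
  have h5 : IsSquare (5 : ℚ) := by
    refine ⟨2 * x + 1, ?_⟩
    nlinarith [h]
  rw [show ((5 : ℚ)) = ((5 : ℕ) : ℚ) by norm_num, Rat.isSquare_natCast_iff] at h5
  obtain ⟨r, hr⟩ := h5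
  rcases Nat.lt_or_ge r 3 with hr3 | hr3
  · interval_cases r <;> omega
  · nlinarith

-- num/denom uniqueness
lemma num_denom_eq {p q : ℚ[X]} (hq : q.Monic) (hcop : IsCoprime p q)
    {x : RQ} (hx : x = am p / am q) : x.num = p ∧ x.denom = q := by
  have hq0 : q ≠ 0 := hq.ne_zero
  have hcross : x.num * q = p * x.denom :=
    (RatFunc.num_mul_eq_mul_denom_iff hq0).mpr hx
  have hcd : IsCoprime x.num x.denom := RatFunc.isCoprime_num_denom x
  have hdvd1 : q ∣ x.denom := by
    have : q ∣ p * x.denom := ⟨x.num, by linear_combination -hcross⟩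
    exact (hcop.symm.dvd_of_dvd_mul_left this)
  have hdvd2 : x.denom ∣ q := by
    have : x.denom ∣ x.num * q := ⟨p, by linear_combination hcross⟩
    exact (hcd.symm.dvd_of_dvd_mul_left this)
  have hqd : x.denom = q :=
    Polynomial.eq_of_monic_of_associated (RatFunc.monic_denom x) hq
      (associated_of_dvd_dvd hdvd2 hdvd1)
  refine ⟨?_, hqd⟩
  have := hcross
  rw [hqd] at this
  exact mul_right_cancel₀ hq0 this

-- the fraction step helper
lemma frac_step {p q p' q' : ℚ[X]} (hp : p ≠ 0) (hq : q ≠ 0) (hq' : q' ≠ 0)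
    (hid : p' * p ^ 2 = (p - X * q) * (p - q) * q') {x : RQ}
    (hx : x = am p / am q) :
    ((x - RatFunc.X) * (x - 1)) / x ^ 2 = am p' / am q' := by
  have hP := am_ne_zero hp
  have hQ := am_ne_zero hq
  have hQ' := am_ne_zero hq'
  subst hx
  have hx0 : am p / am q ≠ 0 := div_ne_zero hP hQ
  have hXX : (RatFunc.X : RQ) = am X := (RatFunc.algebraMap_X).symm
  rw [div_eq_div_iff (pow_ne_zero 2 hx0) hQ']
  have h2 : am (p' * p ^ 2) = am ((p - X * q) * (p - q) * q') := by rw [hid]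
  push_cast [map_mul, map_sub, map_pow, RatFunc.algebraMap_X] at h2
  field_simp
  linear_combination -h2

def mval (m : ℕ) (p q : ℚ[X]) : Prop :=
  if m % 3 = 1 then
    p.coeff 0 ≠ 0 ∧ q.coeff 0 = 0 ∧ q.coeff 1 ≠ 0 ∧ q.coeff 1 ≠ -p.coeff 0
  else if m % 3 = 2 then
    p.coeff 0 = q.coeff 0 ∧ p.coeff 0 ≠ 0 ∧ p.coeff 1 ≠ q.coeff 1 ∧
      p.coeff 1 - q.coeff 1 ≠ p.coeff 0
  else
    p.coeff 0 = 0 ∧ p.coeff 1 ≠ 0 ∧ q.coeff 0 ≠ 0 ∧ p.coeff 1 ≠ q.coeff 0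

structure Invar (m : ℕ) (p q : ℚ[X]) : Prop where
  mon : q.Monic
  pne : p ≠ 0
  cop : IsCoprime p q
  hF : F m = am p / am q
  lcne : p.leadingCoeff ≠ 1
  hdeg : p.natDegree = q.natDegree + m % 2
  hqpos : 1 ≤ q.natDegree
  hval : mval m p q

-- facts about the two factors
lemma fb_facts {p q : ℚ[X]} (mon : q.Monic) (hp0 : p ≠ 0) (lcne : p.leadingCoeff ≠ 1)
    (hle : q.natDegree ≤ p.natDegree) :
    (p - q).natDegree = p.natDegree ∧ (p - q).leadingCoeff ≠ 0 ∧ p - q ≠ 0 ∧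
      ((q.natDegree = p.natDegree → (p - q).leadingCoeff = p.leadingCoeff - 1) ∧
       (q.natDegree < p.natDegree → (p - q).leadingCoeff = p.leadingCoeff)) := by
  rcases lt_or_eq_of_le hle with hlt | heq
  · have h := degree_sub_helper (le_refl p.natDegree) (le_of_lt hlt)
      (by rw [coeff_natDegree, coeff_eq_zero_of_natDegree_lt hlt]
          exact leadingCoeff_ne_zero.mpr hp0)
    refine ⟨h.1, ?_, h.2.2, fun he => absurd he (by omega), fun _ => ?_⟩
    · rw [h.2.1, coeff_natDegree, coeff_eq_zero_of_natDegree_lt hlt, sub_zero]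
      exact leadingCoeff_ne_zero.mpr hp0
    · rw [h.2.1, coeff_natDegree, coeff_eq_zero_of_natDegree_lt hlt, sub_zero]
  · have h := degree_sub_helper (le_refl p.natDegree) (le_of_eq heq)
      (by rw [coeff_natDegree, ← heq, coeff_natDegree, mon.leadingCoeff]
          exact lcne)
    refine ⟨h.1, ?_, h.2.2, fun _ => ?_, fun hlt => absurd heq (by omega)⟩
    · rw [h.2.1, coeff_natDegree, ← heq, coeff_natDegree, mon.leadingCoeff]
      exact sub_ne_zero.mpr lcne
    · rw [h.2.1, coeff_natDegree, ← heq, coeff_natDegree, mon.leadingCoeff]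

lemma faodd {p q : ℚ[X]} (mon : q.Monic) (hp0 : p ≠ 0) (lcne : p.leadingCoeff ≠ 1)
    (hdeg : p.natDegree = q.natDegree + 1) :
    (p - X * q).natDegree = p.natDegree ∧
      (p - X * q).leadingCoeff = p.leadingCoeff - 1 ∧ p - X * q ≠ 0 := by
  have hq0 : q ≠ 0 := mon.ne_zero
  have hXq : (X * q).natDegree = q.natDegree + 1 := by
    rw [natDegree_mul X_ne_zero hq0, natDegree_X]; omega
  have hcoeff : (X * q).coeff p.natDegree = 1 := by
    rw [hdeg, coeff_X_mul, ← mon.leadingCoeff, coeff_natDegree]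
  have h := degree_sub_helper (a := p) (b := X * q) (D := p.natDegree)
    (le_refl p.natDegree) (le_of_eq (by omega))
    (by rw [coeff_natDegree, hcoeff]; exact lcne)
  exact ⟨h.1, by rw [h.2.1, coeff_natDegree, hcoeff], h.2.2⟩

lemma faeven {p q : ℚ[X]} (mon : q.Monic) (hp0 : p ≠ 0)
    (hdeg : p.natDegree = q.natDegree) :
    (p - X * q).natDegree = p.natDegree + 1 ∧
      (p - X * q).leadingCoeff = -1 ∧ p - X * q ≠ 0 := by
  have hq0 : q ≠ 0 := mon.ne_zero
  have hXq : (X * q).natDegree = q.natDegree + 1 := by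
    rw [natDegree_mul X_ne_zero hq0, natDegree_X]; omega
  have hcoeff : (X * q).coeff (p.natDegree + 1) = 1 := by
    rw [hdeg, coeff_X_mul, ← mon.leadingCoeff, coeff_natDegree]
  have h := degree_sub_helper (a := p) (b := X * q) (D := p.natDegree + 1)
    (le_of_lt (by omega)) (le_of_eq (by omega))
    (by rw [hcoeff, coeff_eq_zero_of_natDegree_lt (by omega)]; norm_num)
  refine ⟨h.1, ?_, h.2.2⟩
  rw [h.2.1, hcoeff, coeff_eq_zero_of_natDegree_lt (by omega)]; norm_num

lemma coeff_X_mul_one (s : ℚ[X]) : (X * s).coeff 1 = s.coeff 0 := by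
  have := coeff_X_mul s 0; simpa using this

lemma X_mul_coeff_zero (s : ℚ[X]) : (X * s).coeff 0 = 0 := by
  rw [mul_coeff_zero, coeff_X_zero, zero_mul]

lemma step {m : ℕ} {p q : ℚ[X]} (h : Invar m p q) :
    ∃ p' q', Invar (m + 1) p' q' ∧
      p'.natDegree + m % 2 + (if 3 ∣ m then 1 else 0) = 2 * p.natDegree + 1 := by
  obtain ⟨mon, pne, cop, hF, lcne, hdeg, hqpos, hval⟩ := h
  have hq0 : q ≠ 0 := mon.ne_zero
  have hα : p.leadingCoeff ≠ 0 := leadingCoeff_ne_zero.mpr pne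
  set α : ℚ := p.leadingCoeff with hαdef
  set k : ℚ := α⁻¹ * α⁻¹ with hkdef
  have hk : k ≠ 0 := mul_ne_zero (inv_ne_zero hα) (inv_ne_zero hα)
  have hCk0 : (C k : ℚ[X]) ≠ 0 := fun hc => hk (by simpa using hc)
  have hCk : IsUnit (C k : ℚ[X]) := Polynomial.isUnit_C.mpr (isUnit_iff_ne_zero.mpr hk)
  have hdegle : q.natDegree ≤ p.natDegree := by omega
  obtain ⟨hfbdeg, hfblc0, hfbne, hfblceq, hfblclt⟩ := fb_facts mon pne lcne hdegle
  have hqp : IsCoprime q p := cop.symm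
  have hfb_p : IsCoprime (p - q) p := by
    have h2 := hqp.add_mul_left_left (-1)
    have h3 : p - q = -(q + p * (-1)) := by ring
    rw [h3]; exact h2.neg_left
  have hparity := Nat.mod_two_eq_zero_or_one m
  have hFm1 : F (m + 1) = ((F m - RatFunc.X) * (F m - 1)) / F m ^ 2 := rfl
  have h3cases : m % 3 = 0 ∨ m % 3 = 1 ∨ m % 3 = 2 := by omega
  -- key facts about p - X*q
  have key : ((p - X * q).natDegree + m % 2 = p.natDegree + 1) ∧ (p - X * q ≠ 0) ∧
      (k * ((p - X * q).leadingCoeff * (p - q).leadingCoeff) ≠ 1) := by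
    rcases hparity with he | ho
    · obtain ⟨d1, l1, n1⟩ := faeven mon pne (by omega)
      refine ⟨by omega, n1, ?_⟩
      rw [l1, hfblceq (by omega)]
      intro hc
      have hkk : k * (α * α) = 1 := by rw [hkdef]; field_simp
      have h6 : (-1) * (α - 1) = α * α := mul_left_cancel₀ hk (by rw [hc, hkk])
      exact rat_no_root α (by linear_combination -h6)
    · obtain ⟨d1, l1, n1⟩ := faodd mon pne lcne (by omega)
      refine ⟨by omega, n1, ?_⟩
      rw [l1, hfblclt (by omega)]
      intro hc
      have hkk : k * (α * α) = 1 := by rw [hkdef]; field_simp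
      have h6 : (α - 1) * α = α * α := mul_left_cancel₀ hk (by rw [hc, hkk])
      have h7 : α - 1 = α := mul_right_cancel₀ hα h6
      linarith
  obtain ⟨hfadeg, hfane, hlcp'ne⟩ := key
  rcases h3cases with h3 | h3 | h3
  · -- m % 3 = 0 : cancellation case
    obtain ⟨hμ0, hp1, hν, hp1ν⟩ : p.coeff 0 = 0 ∧ p.coeff 1 ≠ 0 ∧ q.coeff 0 ≠ 0 ∧
        p.coeff 1 ≠ q.coeff 0 := by
      unfold mval at hval; rw [h3] at hval; simpa using hval
    have hd3 : 3 ∣ m := Nat.dvd_of_mod_eq_zero h3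
    obtain ⟨pt, hpt⟩ : ∃ pt, p = X * pt := X_dvd_iff.mpr hμ0
    have hpt0 : pt ≠ 0 := by
      intro hz; rw [hz, mul_zero] at hpt; exact pne hpt
    have hlcpt : pt.leadingCoeff = p.leadingCoeff := by
      rw [hpt, leadingCoeff_mul, leadingCoeff_X, one_mul]
    have hdegpt : p.natDegree = pt.natDegree + 1 := by
      rw [hpt, natDegree_mul X_ne_zero hpt0, natDegree_X]; omega
    have hptc0 : pt.coeff 0 = p.coeff 1 := by rw [hpt, coeff_X_mul_one]
    have key0 : ((pt - q).natDegree + m % 2 = p.natDegree) ∧ (pt - q ≠ 0) ∧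
        (k * ((pt - q).leadingCoeff * (p - q).leadingCoeff) ≠ 1) := by
      have c2 : q.coeff q.natDegree = 1 := by rw [coeff_natDegree, mon.leadingCoeff]
      rcases hparity with he | ho
      · have c1 : pt.coeff q.natDegree = 0 :=
          coeff_eq_zero_of_natDegree_lt (by omega)
        have h := degree_sub_helper (a := pt) (b := q) (D := q.natDegree)
          (le_of_lt (by omega)) (le_refl _) (by rw [c1, c2]; norm_num)
        refine ⟨by omega, h.2.2, ?_⟩
        rw [h.2.1, hfblceq (by omega), c1, c2]
        intro hc
        have hkk : k * (α * α) = 1 := by rw [hkdef]; field_simp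
        have h6 : (0 - 1) * (α - 1) = α * α := mul_left_cancel₀ hk (by rw [hc, hkk])
        exact rat_no_root α (by linear_combination -h6)
      · have c1 : pt.coeff q.natDegree = α := by
          rw [show q.natDegree = pt.natDegree by omega, coeff_natDegree, hlcpt]
        have h := degree_sub_helper (a := pt) (b := q) (D := q.natDegree)
          (le_of_eq (by omega)) (le_refl _) (by rw [c1, c2]; exact lcne)
        refine ⟨by omega, h.2.2, ?_⟩
        rw [h.2.1, hfblclt (by omega), c1, c2]
        intro hc
        have hkk : k * (α * α) = 1 := by rw [hkdef]; field_simp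
        have h6 : (α - 1) * α = α * α := mul_left_cancel₀ hk (by rw [hc, hkk])
        have h7 : α - 1 = α := mul_right_cancel₀ hα h6
        linarith
    obtain ⟨hfadeg0, hfane0, hlcp'ne0⟩ := key0
    refine ⟨C k * ((pt - q) * (p - q)), C k * (X * (pt * pt)), ?_, ?_⟩
    · have hptq : IsCoprime pt q := by
        have h1 : IsCoprime (X * pt) q := by rw [← hpt]; exact cop
        exact h1.of_mul_left_right
      have hqpt : IsCoprime q pt := hptq.symm
      have hfa_pt : IsCoprime (pt - q) pt := by
        have h2 := hqpt.add_mul_left_left (-1)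
        have h4 : pt - q = -(q + pt * (-1)) := by ring
        rw [h4]; exact h2.neg_left
      have hfb_pt : IsCoprime (p - q) pt := by
        have h2 := hqpt.add_mul_left_left (-X)
        have h4 : p - q = -(q + pt * (-X)) := by rw [hpt]; ring
        rw [h4]; exact h2.neg_left
      have hfa_X : IsCoprime (pt - q) X := by
        refine (isCoprime_X_of ?_).symm
        rw [coeff_sub, hptc0]
        exact sub_ne_zero.mpr hp1ν
      have hfb_X : IsCoprime (p - q) X := by
        refine (isCoprime_X_of ?_).symm
        rw [coeff_sub, hμ0, zero_sub]
        exact neg_ne_zero.mpr hν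
      have hcop' : IsCoprime (C k * ((pt - q) * (p - q))) (C k * (X * (pt * pt))) := by
        refine (isCoprime_mul_unit_left hCk _ _).mpr ?_
        exact (hfa_X.mul_left hfb_X).mul_right
          ((hfa_pt.mul_left hfb_pt).mul_right (hfa_pt.mul_left hfb_pt))
      have hq'ne : C k * (X * (pt * pt)) ≠ 0 :=
        mul_ne_zero hCk0 (mul_ne_zero X_ne_zero (mul_ne_zero hpt0 hpt0))
      have cp'0 : (C k * ((pt - q) * (p - q))).coeff 0 =
          k * ((p.coeff 1 - q.coeff 0) * (-q.coeff 0)) := by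
        rw [coeff_C_mul, mul_coeff_zero, coeff_sub, coeff_sub, hptc0, hμ0, zero_sub]
      have cq'0 : (C k * (X * (pt * pt))).coeff 0 = 0 := by
        rw [coeff_C_mul, X_mul_coeff_zero, mul_zero]
      have cq'1 : (C k * (X * (pt * pt))).coeff 1 = k * (p.coeff 1 * p.coeff 1) := by
        rw [coeff_C_mul, coeff_X_mul_one, mul_coeff_zero, hptc0]
      have hdegp' : (C k * ((pt - q) * (p - q))).natDegree =
          (pt - q).natDegree + p.natDegree := by
        rw [natDegree_C_mul hk, natDegree_mul hfane0 hfbne, hfbdeg]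
      have hdegq' : (C k * (X * (pt * pt))).natDegree = 2 * p.natDegree - 1 := by
        rw [natDegree_C_mul hk, natDegree_mul X_ne_zero (mul_ne_zero hpt0 hpt0),
          natDegree_mul hpt0 hpt0, natDegree_X]
        omega
      refine ⟨?_, mul_ne_zero hCk0 (mul_ne_zero hfane0 hfbne), hcop', ?_, ?_, ?_, ?_, ?_⟩
      · apply monic_C_mul_of_mul_leadingCoeff_eq_one
        rw [leadingCoeff_mul, leadingCoeff_mul, leadingCoeff_X, hlcpt, one_mul, hkdef]
        field_simp
        rfl
      · rw [hFm1]
        refine frac_step pne hq0 hq'ne ?_ hF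
        rw [hpt]; ring
      · rw [leadingCoeff_mul, leadingCoeff_C, leadingCoeff_mul]
        exact hlcp'ne0
      · rw [hdegp', hdegq']; omega
      · rw [hdegq']; omega
      · unfold mval
        rw [if_pos (by omega)]
        refine ⟨?_, cq'0, ?_, ?_⟩
        · rw [cp'0]
          exact mul_ne_zero hk
            (mul_ne_zero (sub_ne_zero.mpr hp1ν) (neg_ne_zero.mpr hν))
        · rw [cq'1]
          exact mul_ne_zero hk (mul_ne_zero hp1 hp1)
        · intro hc
          rw [cq'1, cp'0] at hc
          have h5 : k * (p.coeff 1 * p.coeff 1 - p.coeff 1 * q.coeff 0 +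
              q.coeff 0 * q.coeff 0) = 0 := by linear_combination hc
          rcases mul_eq_zero.mp h5 with h6 | h6
          · exact hk h6
          · have h8 : 0 < q.coeff 0 ^ 2 := pow_two_pos_of_ne_zero hν
            nlinarith [sq_nonneg (2 * p.coeff 1 - q.coeff 0), h8]
    · rw [if_pos hd3, natDegree_C_mul hk, natDegree_mul hfane0 hfbne, hfbdeg]
      omega
  · -- m % 3 = 1 : no cancellation
    obtain ⟨hμ, hν, ht, htμ⟩ : p.coeff 0 ≠ 0 ∧ q.coeff 0 = 0 ∧ q.coeff 1 ≠ 0 ∧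
        q.coeff 1 ≠ -p.coeff 0 := by
      unfold mval at hval; rw [h3] at hval; simpa using hval
    have hnd : ¬ (3 ∣ m) := by omega
    set fa : ℚ[X] := p - X * q with hfadef
    set fb : ℚ[X] := p - q with hfbdef
    refine ⟨C k * (fa * fb), C k * (p * p), ?_, ?_⟩
    · have hXp : IsCoprime (X : ℚ[X]) p := isCoprime_X_of hμ
      have hfa_p : IsCoprime fa p := by
        have h1 : IsCoprime (X * q) p := hXp.mul_left hqp
        have h2 := h1.add_mul_left_left (-1)
        have h4 : fa = -(X * q + p * (-1)) := by rw [hfadef]; ring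
        rw [h4]; exact h2.neg_left
      have hcop' : IsCoprime (C k * (fa * fb)) (C k * (p * p)) :=
        (isCoprime_mul_unit_left hCk _ _).mpr
          ((hfa_p.mul_left hfb_p).mul_right (hfa_p.mul_left hfb_p))
      -- coefficients
      have cfa0 : fa.coeff 0 = p.coeff 0 := by
        rw [hfadef, coeff_sub, X_mul_coeff_zero, sub_zero]
      have cfa1 : fa.coeff 1 = p.coeff 1 - q.coeff 0 := by
        rw [hfadef, coeff_sub, coeff_X_mul_one]
      have cfb0 : fb.coeff 0 = p.coeff 0 - q.coeff 0 := by rw [hfbdef, coeff_sub]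
      have cfb1 : fb.coeff 1 = p.coeff 1 - q.coeff 1 := by rw [hfbdef, coeff_sub]
      have cp'0 : (C k * (fa * fb)).coeff 0 = k * (p.coeff 0 * (p.coeff 0 - q.coeff 0)) := by
        rw [coeff_C_mul, mul_coeff_zero, cfa0, cfb0]
      have cp'1 : (C k * (fa * fb)).coeff 1 =
          k * (p.coeff 0 * (p.coeff 1 - q.coeff 1) +
            (p.coeff 1 - q.coeff 0) * (p.coeff 0 - q.coeff 0)) := by
        rw [coeff_C_mul, coeff_mul_one, cfa0, cfa1, cfb0, cfb1]
      have cq'0 : (C k * (p * p)).coeff 0 = k * (p.coeff 0 * p.coeff 0) := by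
        rw [coeff_C_mul, mul_coeff_zero]
      have cq'1 : (C k * (p * p)).coeff 1 =
          k * (p.coeff 0 * p.coeff 1 + p.coeff 1 * p.coeff 0) := by
        rw [coeff_C_mul, coeff_mul_one]
      have hdegp' : (C k * (fa * fb)).natDegree = 2 * p.natDegree + 1 - m % 2 := by
        rw [natDegree_C_mul hk, natDegree_mul hfane hfbne, hfbdeg]; omega
      have hdegq' : (C k * (p * p)).natDegree = 2 * p.natDegree := by
        rw [natDegree_C_mul hk, natDegree_mul pne pne]; omega
      refine ⟨?_, mul_ne_zero hCk0 (mul_ne_zero hfane hfbne), hcop', ?_, ?_, ?_, ?_, ?_⟩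
      · apply monic_C_mul_of_mul_leadingCoeff_eq_one
        rw [leadingCoeff_mul, hkdef]
        field_simp
        rfl
      · rw [hFm1]
        exact frac_step pne hq0 (mul_ne_zero hCk0 (mul_ne_zero pne pne))
          (by rw [hfadef, hfbdef]; ring) hF
      · rw [leadingCoeff_mul, leadingCoeff_C, leadingCoeff_mul]
        exact hlcp'ne
      · rw [hdegp', hdegq']; omega
      · rw [hdegq']; omega
      · unfold mval
        rw [if_neg (by omega), if_pos (by omega)]
        refine ⟨?_, ?_, ?_, ?_⟩
        · rw [cp'0, cq'0, hν, sub_zero]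
        · rw [cp'0, hν, sub_zero]
          exact mul_ne_zero hk (mul_ne_zero hμ hμ)
        · intro hc
          rw [cp'1, cq'1] at hc
          have h5 : k * (p.coeff 0 * q.coeff 1) = 0 := by
            rw [hν] at hc; linear_combination -hc
          rcases mul_eq_zero.mp h5 with h6 | h6
          · exact hk h6
          rcases mul_eq_zero.mp h6 with h7 | h7
          · exact hμ h7
          · exact ht h7
        · intro hc
          rw [cp'1, cq'1, cp'0] at hc
          have h5 : k * (p.coeff 0 * (q.coeff 1 + p.coeff 0)) = 0 := by
            rw [hν] at hc; linear_combination -hc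
          rcases mul_eq_zero.mp h5 with h6 | h6
          · exact hk h6
          rcases mul_eq_zero.mp h6 with h7 | h7
          · exact hμ h7
          · exact htμ (by linarith)
    · rw [if_neg hnd]
      rw [natDegree_C_mul hk, natDegree_mul hfane hfbne, hfbdeg]
      omega
  · -- m % 3 = 2
    obtain ⟨hμν, hμ, h11, h12⟩ : p.coeff 0 = q.coeff 0 ∧ p.coeff 0 ≠ 0 ∧
        p.coeff 1 ≠ q.coeff 1 ∧ p.coeff 1 - q.coeff 1 ≠ p.coeff 0 := by
      unfold mval at hval; rw [h3] at hval; simpa using hval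
    have hnd : ¬ (3 ∣ m) := by omega
    set fa : ℚ[X] := p - X * q with hfadef
    set fb : ℚ[X] := p - q with hfbdef
    refine ⟨C k * (fa * fb), C k * (p * p), ?_, ?_⟩
    · have hXp : IsCoprime (X : ℚ[X]) p := isCoprime_X_of hμ
      have hfa_p : IsCoprime fa p := by
        have h1 : IsCoprime (X * q) p := hXp.mul_left hqp
        have h2 := h1.add_mul_left_left (-1)
        have h4 : fa = -(X * q + p * (-1)) := by rw [hfadef]; ring
        rw [h4]; exact h2.neg_left
      have hcop' : IsCoprime (C k * (fa * fb)) (C k * (p * p)) :=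
        (isCoprime_mul_unit_left hCk _ _).mpr
          ((hfa_p.mul_left hfb_p).mul_right (hfa_p.mul_left hfb_p))
      have cfa0 : fa.coeff 0 = p.coeff 0 := by
        rw [hfadef, coeff_sub, X_mul_coeff_zero, sub_zero]
      have cfa1 : fa.coeff 1 = p.coeff 1 - q.coeff 0 := by
        rw [hfadef, coeff_sub, coeff_X_mul_one]
      have cfb0 : fb.coeff 0 = p.coeff 0 - q.coeff 0 := by rw [hfbdef, coeff_sub]
      have cfb1 : fb.coeff 1 = p.coeff 1 - q.coeff 1 := by rw [hfbdef, coeff_sub]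
      have hz : p.coeff 0 - q.coeff 0 = 0 := by rw [hμν, sub_self]
      have cp'0 : (C k * (fa * fb)).coeff 0 = 0 := by
        rw [coeff_C_mul, mul_coeff_zero, cfa0, cfb0, hz, mul_zero, mul_zero]
      have cp'1 : (C k * (fa * fb)).coeff 1 =
          k * (p.coeff 0 * (p.coeff 1 - q.coeff 1)) := by
        rw [coeff_C_mul, coeff_mul_one, cfa0, cfa1, cfb0, cfb1, hz, mul_zero, add_zero]
      have cq'0 : (C k * (p * p)).coeff 0 = k * (p.coeff 0 * p.coeff 0) := by
        rw [coeff_C_mul, mul_coeff_zero]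
      have hdegp' : (C k * (fa * fb)).natDegree = 2 * p.natDegree + 1 - m % 2 := by
        rw [natDegree_C_mul hk, natDegree_mul hfane hfbne, hfbdeg]; omega
      have hdegq' : (C k * (p * p)).natDegree = 2 * p.natDegree := by
        rw [natDegree_C_mul hk, natDegree_mul pne pne]; omega
      refine ⟨?_, mul_ne_zero hCk0 (mul_ne_zero hfane hfbne), hcop', ?_, ?_, ?_, ?_, ?_⟩
      · apply monic_C_mul_of_mul_leadingCoeff_eq_one
        rw [leadingCoeff_mul, hkdef]
        field_simp
        rfl
      · rw [hFm1]
        exact frac_step pne hq0 (mul_ne_zero hCk0 (mul_ne_zero pne pne))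
          (by rw [hfadef, hfbdef]; ring) hF
      · rw [leadingCoeff_mul, leadingCoeff_C, leadingCoeff_mul]
        exact hlcp'ne
      · rw [hdegp', hdegq']; omega
      · rw [hdegq']; omega
      · unfold mval
        rw [if_neg (by omega), if_neg (by omega)]
        refine ⟨cp'0, ?_, ?_, ?_⟩
        · rw [cp'1]
          exact mul_ne_zero hk (mul_ne_zero hμ (sub_ne_zero.mpr h11))
        · rw [cq'0]
          exact mul_ne_zero hk (mul_ne_zero hμ hμ)
        · intro hc
          rw [cp'1, cq'0] at hc
          have h5 : k * (p.coeff 0 * (p.coeff 1 - q.coeff 1 - p.coeff 0)) = 0 := by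
            linear_combination hc
          rcases mul_eq_zero.mp h5 with h6 | h6
          · exact hk h6
          rcases mul_eq_zero.mp h6 with h7 | h7
          · exact hμ h7
          · exact h12 (by linarith)
    · rw [if_neg hnd]
      rw [natDegree_C_mul hk, natDegree_mul hfane hfbne, hfbdeg]
      omega

noncomputable def p1 : ℚ[X] := C (-1/4 : ℚ) * X^2 + C (1/2 : ℚ) * X + C (-1/4 : ℚ)

lemma p1_coeff0 : p1.coeff 0 = -1/4 := by
  simp [p1, coeff_add, coeff_C_mul, coeff_X_pow, coeff_X, coeff_C]

lemma p1_coeff1 : p1.coeff 1 = 1/2 := by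
  simp [p1, coeff_add, coeff_C_mul, coeff_X_pow, coeff_X, coeff_C]

lemma p1_natDegree : p1.natDegree = 2 := by
  unfold p1; compute_degree!

lemma p1_lc : p1.leadingCoeff = -1/4 := by
  rw [leadingCoeff, p1_natDegree]
  simp [p1, coeff_add, coeff_C_mul, coeff_X_pow, coeff_X, coeff_C]

lemma p1_ne : p1 ≠ 0 := fun h => by
  have := p1_coeff0; rw [h] at this; norm_num at this

lemma X1_ne : (X + 1 : ℚ[X]) ≠ 0 := by
  rw [← C_1]; exact (monic_X_add_C (1 : ℚ)).ne_zero

lemma Invar_one : Invar 1 p1 X := by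
  have hF0 : F 0 = am (2 * X) / am (X + 1) := by
    show (2 * RatFunc.X) / (RatFunc.X + 1) = _
    rw [map_mul, map_add, RatFunc.algebraMap_X, map_ofNat, map_one]
  have hF1 : F 1 = ((F 0 - RatFunc.X) * (F 0 - 1)) / F 0 ^ 2 := rfl
  refine ⟨monic_X, p1_ne, ?_, ?_, ?_, ?_, ?_, ?_⟩
  · exact (isCoprime_X_of (by rw [p1_coeff0]; norm_num)).symm
  · rw [hF1]
    refine frac_step (mul_ne_zero two_ne_zero X_ne_zero) X1_ne X_ne_zero ?_ hF0
    unfold p1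
    apply Polynomial.funext
    intro r
    simp only [eval_mul, eval_add, eval_sub, eval_pow, eval_C, eval_X, eval_ofNat, eval_one]
    ring
  · rw [p1_lc]; norm_num
  · rw [p1_natDegree, natDegree_X]
  · rw [natDegree_X]
  · unfold mval
    rw [if_pos rfl]
    refine ⟨by rw [p1_coeff0]; norm_num, coeff_X_zero, by rw [coeff_X_one]; norm_num, ?_⟩
    rw [coeff_X_one, p1_coeff0]; norm_num

lemma Ndeg {m : ℕ} {p q : ℚ[X]} (h : Invar m p q) :
    (((X + 1) * (F m).num - X * (F m).denom).natDegree : ℤ) = (p.natDegree : ℤ) + 1 := by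
  obtain ⟨hnum, hden⟩ := num_denom_eq h.mon h.cop h.hF
  rw [hnum, hden]
  have hα : p.leadingCoeff ≠ 0 := leadingCoeff_ne_zero.mpr h.pne
  have hx1 : (X + 1 : ℚ[X]).Monic := by rw [← C_1]; exact monic_X_add_C 1
  have hx1deg : (X + 1 : ℚ[X]).natDegree = 1 := by
    rw [← C_1]; exact natDegree_X_add_C 1
  have ha_deg : ((X + 1) * p).natDegree = p.natDegree + 1 := by
    rw [natDegree_mul X1_ne h.pne, hx1deg]; omega
  have ha_lc : ((X + 1) * p).coeff (p.natDegree + 1) = p.leadingCoeff := by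
    rw [← ha_deg, coeff_natDegree, leadingCoeff_mul, hx1.leadingCoeff, one_mul]
  have hb_deg : (X * q).natDegree = q.natDegree + 1 := by
    rw [natDegree_mul X_ne_zero h.mon.ne_zero, natDegree_X]; omega
  have hdeg := h.hdeg
  rcases Nat.mod_two_eq_zero_or_one m with he | ho
  · have hb : (X * q).coeff (p.natDegree + 1) = 1 := by
      rw [show p.natDegree + 1 = (X * q).natDegree by omega, coeff_natDegree,
        leadingCoeff_mul, leadingCoeff_X, one_mul, h.mon.leadingCoeff]
    have hh := degree_sub_helper (a := (X + 1) * p) (b := X * q) (D := p.natDegree + 1)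
      (le_of_eq ha_deg) (le_of_eq (by omega)) (by rw [ha_lc, hb]; exact h.lcne)
    rw [hh.1]; push_cast; ring
  · have hb : (X * q).coeff (p.natDegree + 1) = 0 :=
      coeff_eq_zero_of_natDegree_lt (by omega)
    have hh := degree_sub_helper (a := (X + 1) * p) (b := X * q) (D := p.natDegree + 1)
      (le_of_eq ha_deg) (le_of_lt (by omega)) (by rw [ha_lc, hb]; exact hα)
    rw [hh.1]; push_cast; ring


lemma A_mulVec (w : Fin 3 → ℤ) :
    A.mulVec w = ![w 1, w 2, 2 * w 0 + w 1 + w 2] := by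
  funext i
  fin_cases i <;>
    simp [A, Matrix.mulVec, dotProduct, Fin.sum_univ_three] <;> ring

lemma B_mulVec (w : Fin 4 → ℤ) :
    B.mulVec w = ![w 3, w 1 + w 2, 2 * w 0 + w 1, w 2 + w 3] := by
  funext i
  fin_cases i <;>
    simp [B, Matrix.mulVec, dotProduct, Fin.sum_univ_four] <;> ring

def xA (n : ℕ) : Fin 3 → ℤ := (A ^ n).mulVec ![0, 0, 1]
def zA (n : ℕ) : Fin 3 → ℤ := (A ^ n).mulVec ![0, 1, -1]
def xB (n : ℕ) : Fin 4 → ℤ := (B ^ n).mulVec ![0, 0, 0, 1]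
def zB (n : ℕ) : Fin 4 → ℤ := (B ^ n).mulVec ![1, 0, 0, -1]

lemma pow_mulVec_succ (M : Matrix (Fin 3) (Fin 3) ℤ) (n : ℕ) (v : Fin 3 → ℤ) :
    (M ^ (n+1)).mulVec v = (M ^ n).mulVec (M.mulVec v) := by
  rw [pow_succ, ← Matrix.mulVec_mulVec]

lemma pow_mulVec_succ4 (M : Matrix (Fin 4) (Fin 4) ℤ) (n : ℕ) (v : Fin 4 → ℤ) :
    (M ^ (n+1)).mulVec v = (M ^ n).mulVec (M.mulVec v) := by
  rw [pow_succ, ← Matrix.mulVec_mulVec]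

lemma A1 : A.mulVec ![0,0,1] = ![0,1,1] := by
  rw [A_mulVec]; funext i; fin_cases i <;> norm_num [Matrix.cons_val_two, Matrix.cons_val_three]
lemma Az1 : A.mulVec ![0,1,-1] = ![1,-1,0] := by
  rw [A_mulVec]; funext i; fin_cases i <;> norm_num [Matrix.cons_val_two, Matrix.cons_val_three]
lemma Az2 : A.mulVec ![1,-1,0] = ![-1,0,1] := by
  rw [A_mulVec]; funext i; fin_cases i <;> norm_num [Matrix.cons_val_two, Matrix.cons_val_three]
lemma Az3 : A.mulVec ![-1,0,1] = ![0,1,-1] := by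
  rw [A_mulVec]; funext i; fin_cases i <;> norm_num [Matrix.cons_val_two, Matrix.cons_val_three]

lemma B1 : B.mulVec ![0,0,0,1] = ![1,0,0,1] := by
  rw [B_mulVec]; funext i; fin_cases i <;> norm_num [Matrix.cons_val_two, Matrix.cons_val_three]
lemma Bz1 : B.mulVec ![1,0,0,-1] = ![-1,0,2,-1] := by
  rw [B_mulVec]; funext i; fin_cases i <;> norm_num [Matrix.cons_val_two, Matrix.cons_val_three]
lemma Bz2 : B.mulVec ![-1,0,2,-1] = ![-1,2,-2,1] := by
  rw [B_mulVec]; funext i; fin_cases i <;> norm_num [Matrix.cons_val_two, Matrix.cons_val_three]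
lemma Bz3 : B.mulVec ![-1,2,-2,1] = ![1,0,0,-1] := by
  rw [B_mulVec]; funext i; fin_cases i <;> norm_num [Matrix.cons_val_two, Matrix.cons_val_three]

lemma vsplitA : (![0,1,1] : Fin 3 → ℤ) = (2 : ℤ) • ![0,0,1] + ![0,1,-1] := by
  funext i; fin_cases i <;> norm_num

lemma vsplitB : (![1,0,0,1] : Fin 4 → ℤ) = (2 : ℤ) • ![0,0,0,1] + ![1,0,0,-1] := by
  funext i; fin_cases i <;> norm_num

lemma xA_succ (n : ℕ) : xA (n+1) = (2 : ℤ) • xA n + zA n := by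
  rw [xA, pow_mulVec_succ, A1, vsplitA, Matrix.mulVec_add, Matrix.mulVec_smul]
  rfl

lemma xB_succ (n : ℕ) : xB (n+1) = (2 : ℤ) • xB n + zB n := by
  rw [xB, pow_mulVec_succ4, B1, vsplitB, Matrix.mulVec_add, Matrix.mulVec_smul]
  rfl

lemma zA_add_three (n : ℕ) : zA (n+3) = zA n := by
  show (A ^ (n+3)).mulVec _ = _
  rw [pow_mulVec_succ, Az1, pow_mulVec_succ, Az2, pow_mulVec_succ, Az3]
  rfl

lemma zB_add_three (n : ℕ) : zB (n+3) = zB n := by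
  show (B ^ (n+3)).mulVec _ = _
  rw [pow_mulVec_succ4, Bz1, pow_mulVec_succ4, Bz2, pow_mulVec_succ4, Bz3]
  rfl

lemma zA_eq (n : ℕ) : zA n = zA (n % 3) := by
  induction n using Nat.strong_induction_on with
  | _ n ih =>
    match n with
    | 0 => rfl
    | 1 => rfl
    | 2 => rfl
    | (k+3) =>
      rw [zA_add_three, ih k (by omega), Nat.add_mod_right]

lemma zB_eq (n : ℕ) : zB n = zB (n % 3) := by
  induction n using Nat.strong_induction_on with
  | _ n ih =>
    match n with
    | 0 => rfl
    | 1 => rfl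
    | 2 => rfl
    | (k+3) =>
      rw [zB_add_three, ih k (by omega), Nat.add_mod_right]

lemma g_pow {m : ℕ} (hm : 4 ≤ m) : g m = 2 ^ (m - 4) := by
  unfold g; rw [if_neg (by omega), if_neg (by omega)]

lemma f_add_three (m : ℕ) : f (m + 3) = g (m + 3) + f m := by
  unfold f
  rw [show (m + 3) / 3 + 1 = (m / 3 + 1) + 1 by omega, Finset.sum_range_succ']
  have h1 : ∀ k ∈ Finset.range (m / 3 + 1), g (m + 3 - 3 * (k + 1)) = g (m - 3 * k) := by
    intro k hk; congr 1; omega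
  rw [Finset.sum_congr rfl h1, show m + 3 - 3 * 0 = m + 3 by omega]
  ring

lemma c_add_two (m : ℕ) : c (m + 2) = f (m + 2) + c m := by
  unfold c
  rw [show (m + 2) / 2 + 1 = (m / 2 + 1) + 1 by omega, Finset.sum_range_succ']
  have h1 : ∀ k ∈ Finset.range (m / 2 + 1), f (m + 2 - 2 * (k + 1)) = f (m - 2 * k) := by
    intro k hk; congr 1; omega
  rw [Finset.sum_congr rfl h1, show m + 2 - 2 * 0 = m + 2 by omega]
  ring

def rf (r : ℕ) : ℤ := if r = 0 then 3 else if r = 1 then -1 else -2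

lemma f7 : ∀ m : ℕ, 1 ≤ m → 7 * f m = 2 ^ (m - 1) + rf (m % 3) := by
  intro m
  induction m using Nat.strong_induction_on with
  | _ m ih =>
    intro hm
    match m, hm with
    | 1, _ => norm_num [f, g, rf, Finset.sum_range_one]
    | 2, _ => norm_num [f, g, rf, Finset.sum_range_one]
    | 3, _ =>
      norm_num [f, g, rf, Finset.sum_range_succ, Finset.sum_range_one]
    | (m+4), _ =>
      have h1 := ih (m + 1) (by omega) (by omega)
      rw [show m + 4 = (m + 1) + 3 by omega, f_add_three, g_pow (by omega)]
      rw [show (m + 1) + 3 - 4 = m by omega, show (m+1) - 1 = m by omega] at *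
      rw [show ((m+1) + 3) % 3 = (m+1) % 3 by omega,
        show (m+1) + 3 - 1 = m + 3 by omega]
      have hp : (2 : ℤ) ^ (m + 3) = 8 * 2 ^ m := by ring
      linarith

def rc (r : ℕ) : ℤ :=
  if r = 0 then -2 else if r = 1 then -4 else if r = 2 then -8
  else if r = 3 then 5 else if r = 4 then -11 else -1

lemma c21 : ∀ m : ℕ, 1 ≤ m → 21 * c m = 2 ^ (m + 1) + rc (m % 6) := by
  intro m
  induction m using Nat.strong_induction_on with
  | _ m ih =>
    intro hm
    match m, hm with
    | 1, _ => norm_num [c, f, g, rc, Finset.sum_range_one]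
    | 2, _ =>
      norm_num [c, f, g, rc, Finset.sum_range_succ, Finset.sum_range_one]
    | (m+3), _ =>
      have h1 := ih (m + 1) (by omega) (by omega)
      have h2 := f7 (m + 3) (by omega)
      rw [show m + 3 = (m + 1) + 2 by omega, c_add_two]
      rw [show (m+1) + 2 = m + 3 by omega] at *
      rw [show m + 3 - 1 = m + 2 by omega] at h2
      have hp : (2 : ℤ) ^ (m + 4) = 4 * 2 ^ (m + 2) := by ring
      have hp2 : (2 : ℤ) ^ (m + 2) = 2 * 2 ^ (m + 1) := by ring
      have h6 : m % 6 = 0 ∨ m % 6 = 1 ∨ m % 6 = 2 ∨ m % 6 = 3 ∨ m % 6 = 4 ∨ m % 6 = 5 := by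
        omega
      rw [show (m+1) % 6 = (m % 6 + 1) % 6 by omega] at h1
      rw [show (m+3) % 3 = m % 6 % 3 by omega] at h2
      rw [show (m+3) % 6 = (m % 6 + 3) % 6 by omega]
      rcases h6 with h6 | h6 | h6 | h6 | h6 | h6 <;>
        rw [h6] at h1 h2 ⊢ <;>
        norm_num [rc, rf] at h1 h2 ⊢ <;> linarith

lemma zA_zero : zA 0 = ![0, 1, -1] := by rw [zA, pow_zero, Matrix.one_mulVec]
lemma zA_one : zA 1 = ![1, -1, 0] := by rw [zA, pow_one, Az1]
lemma zA_two : zA 2 = ![-1, 0, 1] := by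
  show (A ^ (1 + 1)).mulVec _ = _
  rw [pow_mulVec_succ, Az1, pow_one, Az2]

lemma zB_zero : zB 0 = ![1, 0, 0, -1] := by rw [zB, pow_zero, Matrix.one_mulVec]
lemma zB_one : zB 1 = ![-1, 0, 2, -1] := by rw [zB, pow_one, Bz1]
lemma zB_two : zB 2 = ![-1, 2, -2, 1] := by
  show (B ^ (1 + 1)).mulVec _ = _
  rw [pow_mulVec_succ4, Bz1, pow_one, Bz2]

lemma UU_step (n : ℕ) : xA (n+1) 1 + xA (n+1) 2 =
    2 * (xA n 1 + xA n 2) + (if n % 3 = 0 then 0 else if n % 3 = 1 then -1 else 1) := by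
  rw [xA_succ]
  have h3 : n % 3 = 0 ∨ n % 3 = 1 ∨ n % 3 = 2 := by omega
  rcases h3 with h | h | h <;>
    rw [zA_eq n, h] <;>
    simp [zA_zero, zA_one, zA_two, Pi.add_apply, Pi.smul_apply, smul_eq_mul] <;> ring

lemma WW_step (n : ℕ) : xB (n+1) 3 =
    2 * xB n 3 + (if n % 3 = 2 then 1 else -1) := by
  rw [xB_succ]
  have h3 : n % 3 = 0 ∨ n % 3 = 1 ∨ n % 3 = 2 := by omega
  rcases h3 with h | h | h <;>
    rw [zB_eq n, h] <;>
    simp [zB_zero, zB_one, zB_two, Pi.add_apply, Pi.smul_apply, smul_eq_mul] <;> ring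

def LHSe (m : ℕ) : ℤ :=
  2 * (xA (m-1) 1 + xA (m-1) 2) + xB (m-1) 3 + c m + (if 3 ∣ m then 2 else 0)

lemma Lrec (m : ℕ) (hm : 1 ≤ m) :
    LHSe (m+1) = 2 * LHSe m - (m % 2 : ℤ) - (if 3 ∣ m then 1 else 0) := by
  obtain ⟨n, rfl⟩ : ∃ n, m = n + 1 := ⟨m - 1, by omega⟩
  unfold LHSe
  rw [show n + 1 + 1 - 1 = n + 1 by omega, show n + 1 - 1 = n by omega]
  have hu := UU_step n
  have hw := WW_step n
  have hc1 := c21 (n+1) (by omega)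
  have hc2 := c21 (n+1+1) (by omega)
  have hp : (2:ℤ)^(n+1+1+1) = 2*2^(n+1+1) := by ring
  have hp2 : (2:ℤ)^(n+1+1) = 2*2^(n+1) := by ring
  simp only [Nat.dvd_iff_mod_eq_zero]
  rw [show n % 3 = ((n+1) % 6 + 2) % 3 by omega] at hu hw
  rw [show (n+1+1) % 6 = ((n+1) % 6 + 1) % 6 by omega] at hc2
  rw [show (n+1+1) % 3 = ((n+1) % 6 + 1) % 3 by omega,
    show (n+1) % 3 = (n+1) % 6 % 3 by omega,
    show (((n+1 : ℕ) : ℤ) % 2) = (((n+1) % 6 % 2 : ℕ) : ℤ) by omega]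
  have h6 : (n+1) % 6 = 0 ∨ (n+1) % 6 = 1 ∨ (n+1) % 6 = 2 ∨ (n+1) % 6 = 3 ∨
      (n+1) % 6 = 4 ∨ (n+1) % 6 = 5 := by omega
  rcases h6 with h6 | h6 | h6 | h6 | h6 | h6 <;>
    rw [h6] at hu hw hc1 hc2 ⊢ <;>
    norm_num [rc] at hu hw hc1 hc2 ⊢ <;>
    linarith

lemma LHSe_one : LHSe 1 = 3 := by
  unfold LHSe
  have h1 : xA 0 = ![0,0,1] := by rw [xA, pow_zero, Matrix.one_mulVec]
  have h2 : xB 0 = ![0,0,0,1] := by rw [xB, pow_zero, Matrix.one_mulVec]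
  rw [h1, h2]
  norm_num [c, f, g, Finset.sum_range_one, Matrix.cons_val_two, Matrix.cons_val_three]

theorem capture_count_check (m : ℕ) (hm : 1 ≤ m) :
    2 * (((A ^ (m - 1)).mulVec ![0, 0, 1]) 1 + ((A ^ (m - 1)).mulVec ![0, 0, 1]) 2) +
        ((B ^ (m - 1)).mulVec ![0, 0, 0, 1]) 3 + c m + (if 3 ∣ m then 2 else 0) =
      ((((Polynomial.X + 1) * (F m).num - Polynomial.X * (F m).denom).natDegree : ℤ)) := by
  have key : ∀ k : ℕ, 1 ≤ k → ∃ p q : ℚ[X], Invar k p q ∧ LHSe k = (p.natDegree : ℤ) + 1 := by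
    intro k hk
    induction k, hk using Nat.le_induction with
    | base =>
      exact ⟨p1, Polynomial.X, Invar_one, by rw [LHSe_one, p1_natDegree]; norm_num⟩
    | succ n hn ih =>
      obtain ⟨p, q, hI, hL⟩ := ih
      obtain ⟨p', q', hI', hd⟩ := step hI
      refine ⟨p', q', hI', ?_⟩
      rw [Lrec n hn, hL]
      by_cases hdvd : 3 ∣ n
      · rw [if_pos hdvd] at hd ⊢
        push_cast
        omega
      · rw [if_neg hdvd] at hd ⊢
        push_cast
        omega
  obtain ⟨p, q, hI, hL⟩ := key m hm
  have hN := Ndeg hI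
  have hLHS : LHSe m =
      2 * (((A ^ (m - 1)).mulVec ![0, 0, 1]) 1 + ((A ^ (m - 1)).mulVec ![0, 0, 1]) 2) +
        ((B ^ (m - 1)).mulVec ![0, 0, 0, 1]) 3 + c m + (if 3 ∣ m then 2 else 0) := rfl
  rw [← hLHS]
  exact hL.trans hN.symm
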